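/- There is an absolute constant C > 0 such that for every λ > 1, one has ‖χ_{Ω₀} W⁴·W_λ‖_{L¹L²} + ‖χ_{Ω₀} W·W_λ⁴‖_{L¹L²} ≤ C · λ^(−1/2), where Ω₀ = {(x,t) ∈ ℝ³ × ℝ : |x| > |t|} is the exterior of the main light cone. -/

import Mathlib

open MeasureTheory Real Set

noncomputable section

/-- The ground state `W(x) = (1/3 + |x|^2)^(-1/2)` on `ℝ³`. -/
def W3 (x : EuclideanSpace ℝ (Fin 3)) : ℝ := (1/3 + ‖x‖^2) ^ (-(1:ℝ)/2)

/-- The rescaled ground state `W_λ(x) = λ^(-1/2) W(x/λ)`. -/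
def Wlam (lam : ℝ) (x : EuclideanSpace ℝ (Fin 3)) : ℝ := lam ^ (-(1:ℝ)/2) * W3 (lam⁻¹ • x)

/-- The Strichartz norm `‖χ_Ψ u‖_Y = (∫ (∫_{(x,t)∈Ψ} |u|^10 dx)^(1/2) dt)^(1/5)`. -/
def Ynorm (Ψ : Set (EuclideanSpace ℝ (Fin 3) × ℝ))
    (u : EuclideanSpace ℝ (Fin 3) → ℝ → ℝ) : ℝ :=
  (∫ t : ℝ, (∫ x in {x | (x, t) ∈ Ψ}, |u x t| ^ 10) ^ ((1:ℝ)/2)) ^ ((1:ℝ)/5)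

/-- The norm `‖χ_Ψ u‖_{L¹L²} = ∫ (∫_{(x,t)∈Ψ} |u|² dx)^(1/2) dt`. -/
def L1L2 (Ψ : Set (EuclideanSpace ℝ (Fin 3) × ℝ))
    (u : EuclideanSpace ℝ (Fin 3) → ℝ → ℝ) : ℝ :=
  ∫ t : ℝ, (∫ x in {x | (x, t) ∈ Ψ}, (u x t) ^ 2) ^ ((1:ℝ)/2)

/-- The channel region `Ω_{r₁,r₂} = {(x,t) : |t| + r₁ < |x| < |t| + r₂}`. -/
def channel (r₁ r₂ : ℝ) : Set (EuclideanSpace ℝ (Fin 3) × ℝ) :=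
  {p | |p.2| + r₁ < ‖p.1‖ ∧ ‖p.1‖ < |p.2| + r₂}

/-- The radial free wave with radiation profile `G` (in the negative time direction):
`v(x,t) = |x|⁻¹ ∫_{t-|x|}^{t+|x|} G(s) ds`. -/
def freeWave (G : ℝ → ℝ) (x : EuclideanSpace ℝ (Fin 3)) (t : ℝ) : ℝ :=
  ‖x‖⁻¹ * ∫ s in (t - ‖x‖)..(t + ‖x‖), G s

/-- `‖G‖_{L²(E)} = (∫_E |G|²)^(1/2)`. -/
def L2on (G : ℝ → ℝ) (E : Set ℝ) : ℝ := (∫ s in E, (G s)^2) ^ ((1:ℝ)/2)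

/-- The set whose supremum is `sup_{0<r<λ} (λ/r) ∫_{-r}^r |G(s)|² ds`. -/
def tauA (G : ℝ → ℝ) (lam : ℝ) : Set ℝ :=
  {A | ∃ r, 0 < r ∧ r < lam ∧ A = (lam / r) * ∫ s in (-r)..r, (G s)^2}

/-- The set whose supremum is `sup_{r>0} r^(-1/2) ∫_{-r}^r |G(s)| ds`. -/
def tauB (G : ℝ → ℝ) : Set ℝ :=
  {B | ∃ r, 0 < r ∧ B = (∫ s in (-r)..r, |G s|) / Real.sqrt r}

/-- `τ = (sup_{0<r<λ} (λ/r)∫_{-r}^r |G|²)^(1/2) + sup_{r>0} r^(-1/2)∫_{-r}^r |G|`. -/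
def tau (G : ℝ → ℝ) (lam : ℝ) : ℝ := Real.sqrt (sSup (tauA G lam)) + sSup (tauB G)

abbrev E3 := EuclideanSpace ℝ (Fin 3)


lemma meas_S (r : ℝ) : MeasurableSet {x : E3 | r < ‖x‖} :=
  measurableSet_lt measurable_const measurable_norm

lemma tail_integral {a r : ℝ} (ha : 3 < a) (hr : 0 < r) :
    ∫ x in {x : E3 | r < ‖x‖}, ‖x‖ ^ (-a) =
      (3 * (volume (Metric.ball (0:E3) 1)).toReal / (a - 3)) * r ^ (3 - a) := by
  have h1 : ∫ x in {x : E3 | r < ‖x‖}, ‖x‖ ^ (-a)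
      = ∫ x : E3, (Ioi r).indicator (fun y => y ^ (-a)) ‖x‖ := by
    rw [← integral_indicator (meas_S r)]
    apply integral_congr_ae; filter_upwards with x
    by_cases h : r < ‖x‖
    · rw [Set.indicator_of_mem (by exact h), Set.indicator_of_mem (by exact h)]
    · rw [Set.indicator_of_notMem (by exact h), Set.indicator_of_notMem (by exact h)]
  rw [h1, integral_fun_norm_addHaar (volume : Measure E3)
    ((Ioi r).indicator (fun y => y ^ (-a)))]
  have hdim : Module.finrank ℝ E3 = 3 := finrank_euclideanSpace_fin
  rw [hdim]
  have h2 : ∫ y in Ioi (0:ℝ), y ^ (3-1) • (Ioi r).indicator (fun y => y ^ (-a)) y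
      = ∫ y in Ioi (0:ℝ), (Ioi r).indicator (fun y => y ^ (2:ℕ) * y ^ (-a)) y := by
    apply integral_congr_ae; filter_upwards with y
    by_cases h : y ∈ Ioi r
    · rw [Set.indicator_of_mem h, Set.indicator_of_mem h, smul_eq_mul]
    · rw [Set.indicator_of_notMem h, Set.indicator_of_notMem h, smul_eq_mul, mul_zero]
  rw [h2, integral_indicator measurableSet_Ioi, Measure.restrict_restrict measurableSet_Ioi,
    Set.inter_eq_left.mpr (Ioi_subset_Ioi hr.le)]
  have h3 : ∫ y in Ioi r, y ^ (2:ℕ) * y ^ (-a) = ∫ y in Ioi r, y ^ (2 - a) := by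
    apply setIntegral_congr_fun measurableSet_Ioi
    intro y hy
    have hy0 : (0:ℝ) < y := hr.trans hy
    dsimp only
    rw [← Real.rpow_natCast y 2, ← Real.rpow_add hy0]
    norm_num [sub_eq_add_neg]
  rw [h3, integral_Ioi_rpow_of_lt (by linarith) hr]
  have he : (2:ℝ) - a + 1 = 3 - a := by ring
  rw [he, smul_eq_mul, nsmul_eq_mul]
  have h4 : -r ^ (3-a) / (3 - a) = r ^ (3-a) / (a-3) := by
    rw [div_eq_div_iff (by linarith) (by linarith)]; ring
  rw [h4]
  rw [measureReal_def]; ring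


lemma jb_integrable : Integrable (fun x : E3 => (1+‖x‖^2) ^ (-(2:ℝ))) := by
  have h := integrable_rpow_neg_one_add_norm_sq (μ := (volume : Measure E3)) (r := 4)
    (by rw [finrank_euclideanSpace_fin]; norm_num)
  simpa [show (-4:ℝ)/2 = -2 by norm_num] using h

lemma inv_le_K_mul_inv {A B K : ℝ} (hA : 0 < A) (hB : 0 < B) (h : B ≤ K * A) :
    A⁻¹ ≤ K * B⁻¹ := by
  rw [← div_eq_mul_inv, inv_eq_one_div, div_le_div_iff₀ hA hB]
  linarith

lemma rpow_neg_nat {b : ℝ} (hb : 0 ≤ b) (n : ℕ) : b ^ (-(n:ℝ)) = (b ^ n)⁻¹ := by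
  rw [Real.rpow_neg hb, Real.rpow_natCast]

lemma tail_integrableOn {a r : ℝ} (ha : 4 ≤ a) (hr : 0 < r) :
    IntegrableOn (fun x : E3 => ‖x‖ ^ (-a)) {x : E3 | r < ‖x‖} := by
  set K : ℝ := (r⁻¹^2+1)^2 with hK
  have hKpos : 0 < K := by positivity
  apply Integrable.mono' (((jb_integrable.const_mul (r ^ (4-a) * K))).integrableOn)
  · exact (by fun_prop : Measurable (fun x : E3 => ‖x‖ ^ (-a))).aestronglyMeasurable
  · filter_upwards [ae_restrict_mem (meas_S r)] with x hx
    have hx0 : (0:ℝ) < ‖x‖ := hr.trans hx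
    rw [Real.norm_eq_abs, abs_of_nonneg (Real.rpow_nonneg (norm_nonneg x) _)]
    have e1 : ‖x‖ ^ (-a) = ‖x‖ ^ (-(a-4)) * ‖x‖ ^ (-(4:ℝ)) := by
      rw [← Real.rpow_add hx0]; ring_nf
    have e2 : ‖x‖ ^ (-(a-4)) ≤ r ^ (-(a-4)) :=
      Real.rpow_le_rpow_of_nonpos hr hx.le (by linarith)
    have e4 : (1+‖x‖^2) ≤ (r⁻¹^2+1) * ‖x‖^2 := by
      have h1 : r^2 ≤ ‖x‖^2 := pow_le_pow_left₀ hr.le hx.le 2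
      have h2 : (1:ℝ) ≤ r⁻¹^2 * ‖x‖^2 := by
        have : r⁻¹^2 * r^2 = 1 := by field_simp
        nlinarith [sq_nonneg r⁻¹]
      nlinarith
    have e5 : (1+‖x‖^2)^2 ≤ K * (‖x‖^2)^2 := by
      rw [hK]; nlinarith [norm_nonneg x, sq_nonneg (‖x‖^2), e4, hKpos,
        mul_self_nonneg ((r⁻¹^2+1) * ‖x‖^2 - (1+‖x‖^2))]
    have e3 : ‖x‖ ^ (-(4:ℝ)) ≤ K * (1+‖x‖^2) ^ (-(2:ℝ)) := by
      have n1 : ‖x‖ ^ (-(4:ℝ)) = ((‖x‖^2)^2)⁻¹ := by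
        rw [show (-(4:ℝ)) = -((4:ℕ):ℝ) by norm_num, rpow_neg_nat (norm_nonneg x), ← pow_mul]
      have n2 : (1+‖x‖^2) ^ (-(2:ℝ)) = ((1+‖x‖^2)^2)⁻¹ := by
        rw [show (-(2:ℝ)) = -((2:ℕ):ℝ) by norm_num, rpow_neg_nat (by positivity)]
      rw [n1, n2]
      exact inv_le_K_mul_inv (by positivity) (by positivity) e5
    have e6 : r ^ (-(a-4)) = r ^ (4-a) := by norm_num
    calc ‖x‖ ^ (-a) = ‖x‖ ^ (-(a-4)) * ‖x‖ ^ (-(4:ℝ)) := e1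
      _ ≤ r ^ (-(a-4)) * (K * (1+‖x‖^2) ^ (-(2:ℝ))) := by
          apply mul_le_mul e2 e3 (Real.rpow_nonneg (norm_nonneg x) _)
            (Real.rpow_nonneg hr.le _)
      _ = r ^ (4-a) * K * (1+‖x‖^2) ^ (-(2:ℝ)) := by rw [e6]; ring

lemma base_pos (x : E3) : (0:ℝ) < 1/3 + ‖x‖^2 := by positivity

lemma W3_pos (x : E3) : 0 < W3 x := Real.rpow_pos_of_pos (base_pos x) _

lemma W3_nonneg (x : E3) : 0 ≤ W3 x := (W3_pos x).le

lemma W3_le (x : E3) : W3 x ≤ 3 ^ ((1:ℝ)/2) := by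
  have h : ((1:ℝ)/3) ^ (-(1:ℝ)/2) = 3 ^ ((1:ℝ)/2) := by
    rw [show (1:ℝ)/3 = 3⁻¹ by norm_num, ← Real.rpow_neg_one 3,
      ← Real.rpow_mul (by norm_num : (0:ℝ) ≤ 3)]
    norm_num
  calc W3 x ≤ ((1:ℝ)/3) ^ (-(1:ℝ)/2) := by
        apply Real.rpow_le_rpow_of_nonpos (by norm_num) (by nlinarith [sq_nonneg ‖x‖]) (by norm_num)
    _ = 3 ^ ((1:ℝ)/2) := h

lemma W3_le_norm (x : E3) (h : 0 < ‖x‖) : W3 x ≤ ‖x‖ ^ (-(1:ℝ)) := by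
  have h1 : ‖x‖^2 ≤ 1/3 + ‖x‖^2 := by norm_num
  have h2 : (‖x‖^2 : ℝ) ^ (-(1:ℝ)/2) = ‖x‖ ^ (-(1:ℝ)) := by
    rw [← Real.rpow_natCast ‖x‖ 2, ← Real.rpow_mul (norm_nonneg x)]
    norm_num
  calc W3 x ≤ (‖x‖^2) ^ (-(1:ℝ)/2) :=
        Real.rpow_le_rpow_of_nonpos (by positivity) h1 (by norm_num)
    _ = ‖x‖ ^ (-(1:ℝ)) := h2

lemma W3_le_jb (x : E3) : W3 x ≤ 3 ^ ((1:ℝ)/2) * (1+‖x‖^2) ^ (-(1:ℝ)/2) := by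
  have h1 : (1+‖x‖^2)/3 ≤ 1/3 + ‖x‖^2 := by nlinarith [sq_nonneg ‖x‖]
  have h2 : ((1+‖x‖^2)/3 : ℝ) ^ (-(1:ℝ)/2) = 3 ^ ((1:ℝ)/2) * (1+‖x‖^2) ^ (-(1:ℝ)/2) := by
    rw [div_eq_mul_inv, Real.mul_rpow (by positivity) (by positivity),
      ← Real.rpow_neg_one 3, ← Real.rpow_mul (by norm_num : (0:ℝ) ≤ 3)]
    norm_num [mul_comm]
  calc W3 x ≤ ((1+‖x‖^2)/3) ^ (-(1:ℝ)/2) :=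
        Real.rpow_le_rpow_of_nonpos (by positivity) h1 (by norm_num)
    _ = _ := h2

lemma Wlam_nonneg {lam : ℝ} (hlam : 0 < lam) (x : E3) : 0 ≤ Wlam lam x := by
  exact mul_nonneg (Real.rpow_nonneg hlam.le _) (W3_nonneg _)

lemma Wlam_le {lam : ℝ} (hlam : 0 < lam) (x : E3) :
    Wlam lam x ≤ 3 ^ ((1:ℝ)/2) * lam ^ (-(1:ℝ)/2) := by
  unfold Wlam
  rw [mul_comm]
  exact mul_le_mul_of_nonneg_right (W3_le _) (Real.rpow_nonneg hlam.le _)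

lemma Wlam_le_W {lam : ℝ} (hlam : 1 ≤ lam) (x : E3) :
    Wlam lam x ≤ lam ^ ((1:ℝ)/2) * W3 x := by
  have hl0 : (0:ℝ) < lam := by linarith
  unfold Wlam W3
  have hnorm : ‖lam⁻¹ • x‖^2 = lam^(-(2:ℝ)) * ‖x‖^2 := by
    rw [norm_smul, Real.norm_eq_abs, abs_of_pos (by positivity), mul_pow,
      ← Real.rpow_natCast lam⁻¹ 2, ← Real.rpow_neg_one lam,
      ← Real.rpow_mul hl0.le]
    norm_num
  rw [hnorm]
  -- key: (1/3 + lam⁻²‖x‖²)^(-(1/2)) ≤ lam * (1/3+‖x‖²)^(-(1/2))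
  have key : (1/3 + lam^(-(2:ℝ)) * ‖x‖^2) ^ (-(1:ℝ)/2) ≤ lam * (1/3+‖x‖^2) ^ (-(1:ℝ)/2) := by
    have hb : lam^(-(2:ℝ)) * (1/3+‖x‖^2) ≤ 1/3 + lam^(-(2:ℝ)) * ‖x‖^2 := by
      have h1 : lam^(-(2:ℝ)) ≤ 1 := by
        calc lam^(-(2:ℝ)) ≤ 1^(-(2:ℝ)) := Real.rpow_le_rpow_of_nonpos one_pos hlam (by norm_num)
          _ = 1 := by norm_num
      nlinarith [Real.rpow_pos_of_pos hl0 (-(2:ℝ))]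
    have h2 : (lam^(-(2:ℝ)) * (1/3+‖x‖^2)) ^ (-(1:ℝ)/2) = lam * (1/3+‖x‖^2) ^ (-(1:ℝ)/2) := by
      rw [Real.mul_rpow (by positivity) (by positivity),
        ← Real.rpow_mul hl0.le]
      norm_num
    rw [← h2]
    exact Real.rpow_le_rpow_of_nonpos (by positivity) hb (by norm_num)
  calc lam ^ (-(1:ℝ)/2) * (1/3 + lam^(-(2:ℝ)) * ‖x‖^2) ^ (-(1:ℝ)/2)
      ≤ lam ^ (-(1:ℝ)/2) * (lam * (1/3+‖x‖^2) ^ (-(1:ℝ)/2)) :=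
        mul_le_mul_of_nonneg_left key (Real.rpow_nonneg hl0.le _)
    _ = lam ^ ((1:ℝ)/2) * (1/3+‖x‖^2) ^ (-(1:ℝ)/2) := by
        rw [← mul_assoc]
        congr 1
        nth_rewrite 2 [show (lam:ℝ) = lam ^ (1:ℝ) from (Real.rpow_one lam).symm]
        rw [← Real.rpow_add hl0]
        norm_num

lemma rpow_pow {b : ℝ} (hb : 0 ≤ b) (e : ℝ) (n : ℕ) : (b ^ e) ^ n = b ^ (e * n) := by
  rw [← Real.rpow_natCast (b^e) n, ← Real.rpow_mul hb]

lemma pw1 {lam : ℝ} (hlam : 0 < lam) (x : E3) :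
    ((W3 x)^4 * Wlam lam x)^2 ≤ 243 * lam^(-(1:ℝ)) * (1+‖x‖^2)^(-(4:ℝ)) := by
  set A : ℝ := 3 ^ ((1:ℝ)/2)
  set u : ℝ := (1+‖x‖^2) ^ (-(1:ℝ)/2)
  set L : ℝ := lam ^ (-(1:ℝ)/2)
  have hA : (0:ℝ) ≤ A := Real.rpow_nonneg (by norm_num) _
  have hu : (0:ℝ) ≤ u := Real.rpow_nonneg (by positivity) _
  have hL : (0:ℝ) ≤ L := Real.rpow_nonneg hlam.le _
  have h1 : (W3 x)^4 ≤ (A*u)^4 := pow_le_pow_left₀ (W3_nonneg x) (W3_le_jb x) 4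
  have h2 : (W3 x)^4 * Wlam lam x ≤ (A*u)^4 * (A*L) :=
    mul_le_mul h1 (Wlam_le hlam x) (Wlam_nonneg hlam x) (by positivity)
  have h3 : ((W3 x)^4 * Wlam lam x)^2 ≤ ((A*u)^4 * (A*L))^2 :=
    pow_le_pow_left₀ (mul_nonneg (pow_nonneg (W3_nonneg x) 4) (Wlam_nonneg hlam x)) h2 2
  have h4 : ((A*u)^4 * (A*L))^2 = A^(10:ℕ) * u^(8:ℕ) * L^(2:ℕ) := by ring
  have hA10 : A^(10:ℕ) = 243 := by
    rw [rpow_pow (by norm_num : (0:ℝ) ≤ 3)]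
    norm_num
  have hu8 : u^(8:ℕ) = (1+‖x‖^2)^(-(4:ℝ)) := by
    rw [rpow_pow (by positivity)]
    norm_num
  have hL2 : L^(2:ℕ) = lam^(-(1:ℝ)) := by
    rw [rpow_pow hlam.le]
    norm_num
  calc ((W3 x)^4 * Wlam lam x)^2 ≤ ((A*u)^4 * (A*L))^2 := h3
    _ = 243 * lam^(-(1:ℝ)) * (1+‖x‖^2)^(-(4:ℝ)) := by rw [h4, hA10, hu8, hL2]; ring

lemma pw2 {lam : ℝ} (hlam : 1 ≤ lam) {x : E3} (hx : 0 < ‖x‖) :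
    (W3 x * (Wlam lam x)^4)^2 ≤ 27 * lam^(-(2:ℝ)) * ‖x‖^(-(4:ℝ)) := by
  have hl0 : (0:ℝ) < lam := by linarith
  set A : ℝ := 3 ^ ((1:ℝ)/2)
  set L : ℝ := lam ^ (-(1:ℝ)/2)
  have hA : (0:ℝ) ≤ A := Real.rpow_nonneg (by norm_num) _
  have hL : (0:ℝ) ≤ L := Real.rpow_nonneg hl0.le _
  have hWn : (0:ℝ) ≤ Wlam lam x := Wlam_nonneg hl0 x
  have h1 : (Wlam lam x)^4 ≤ (A*L)^3 * (lam^((1:ℝ)/2) * W3 x) := by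
    have e : (Wlam lam x)^4 = (Wlam lam x)^3 * Wlam lam x := by ring
    rw [e]
    exact mul_le_mul (pow_le_pow_left₀ hWn (Wlam_le hl0 x) 3) (Wlam_le_W hlam x)
      hWn (by positivity)
  have h2 : W3 x * (Wlam lam x)^4 ≤ W3 x * ((A*L)^3 * (lam^((1:ℝ)/2) * W3 x)) :=
    mul_le_mul_of_nonneg_left h1 (W3_nonneg x)
  have h3 : W3 x * ((A*L)^3 * (lam^((1:ℝ)/2) * W3 x))
      = A^3 * (L^3 * lam^((1:ℝ)/2)) * (W3 x)^2 := by ring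
  have hL3 : L^3 * lam^((1:ℝ)/2) = lam^(-(1:ℝ)) := by
    rw [rpow_pow hl0.le, ← Real.rpow_add hl0]
    norm_num
  have hA3 : A^3 = 3 * A := by
    rw [rpow_pow (by norm_num : (0:ℝ) ≤ 3)]
    push_cast
    rw [show ((1:ℝ)/2*3) = 1 + (1:ℝ)/2 by norm_num, Real.rpow_add (by norm_num : (0:ℝ) < 3),
      Real.rpow_one]
  have hW2 : (W3 x)^2 ≤ ‖x‖^(-(2:ℝ)) := by
    have := pow_le_pow_left₀ (W3_nonneg x) (W3_le_norm x hx) 2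
    calc (W3 x)^2 ≤ (‖x‖ ^ (-(1:ℝ)))^2 := this
      _ = ‖x‖^(-(2:ℝ)) := by rw [rpow_pow (norm_nonneg x)]; norm_num
  have key : W3 x * (Wlam lam x)^4 ≤ 3 * A * lam^(-(1:ℝ)) * ‖x‖^(-(2:ℝ)) := by
    calc W3 x * (Wlam lam x)^4 ≤ A^3 * (L^3 * lam^((1:ℝ)/2)) * (W3 x)^2 := by
          rw [← h3]; exact h2
      _ = 3 * A * lam^(-(1:ℝ)) * (W3 x)^2 := by rw [hL3, hA3]
      _ ≤ 3 * A * lam^(-(1:ℝ)) * ‖x‖^(-(2:ℝ)) := by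
          apply mul_le_mul_of_nonneg_left hW2
          positivity
  calc (W3 x * (Wlam lam x)^4)^2 ≤ (3 * A * lam^(-(1:ℝ)) * ‖x‖^(-(2:ℝ)))^2 :=
        pow_le_pow_left₀ (mul_nonneg (W3_nonneg x) (pow_nonneg (Wlam_nonneg hl0 x) 4)) key 2
    _ = 9 * A^2 * (lam^(-(1:ℝ)))^2 * (‖x‖^(-(2:ℝ)))^2 := by ring
    _ = 27 * lam^(-(2:ℝ)) * ‖x‖^(-(4:ℝ)) := by
        rw [rpow_pow hl0.le, rpow_pow (norm_nonneg x), rpow_pow (by norm_num : (0:ℝ) ≤ 3)]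
        norm_num

lemma pw3 {lam : ℝ} (hlam : 1 ≤ lam) {x : E3} (hx : 0 < ‖x‖) :
    (W3 x * (Wlam lam x)^4)^2 ≤ lam^(4:ℝ) * ‖x‖^(-(10:ℝ)) := by
  have hl0 : (0:ℝ) < lam := by linarith
  have h1 : (Wlam lam x)^4 ≤ (lam^((1:ℝ)/2) * W3 x)^4 :=
    pow_le_pow_left₀ (Wlam_nonneg hl0 x) (Wlam_le_W hlam x) 4
  have h2 : W3 x * (Wlam lam x)^4 ≤ (lam^((1:ℝ)/2))^4 * (W3 x)^5 := by
    calc W3 x * (Wlam lam x)^4 ≤ W3 x * (lam^((1:ℝ)/2) * W3 x)^4 :=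
          mul_le_mul_of_nonneg_left h1 (W3_nonneg x)
      _ = (lam^((1:ℝ)/2))^4 * (W3 x)^5 := by ring
  have h3 : (W3 x)^5 ≤ ‖x‖^(-(5:ℝ)) := by
    calc (W3 x)^5 ≤ (‖x‖ ^ (-(1:ℝ)))^5 := pow_le_pow_left₀ (W3_nonneg x) (W3_le_norm x hx) 5
      _ = ‖x‖^(-(5:ℝ)) := by rw [rpow_pow (norm_nonneg x)]; norm_num
  have h4 : W3 x * (Wlam lam x)^4 ≤ lam^(2:ℝ) * ‖x‖^(-(5:ℝ)) := by
    calc W3 x * (Wlam lam x)^4 ≤ (lam^((1:ℝ)/2))^4 * (W3 x)^5 := h2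
      _ ≤ (lam^((1:ℝ)/2))^4 * ‖x‖^(-(5:ℝ)) := by
          apply mul_le_mul_of_nonneg_left h3; positivity
      _ = lam^(2:ℝ) * ‖x‖^(-(5:ℝ)) := by rw [rpow_pow hl0.le]; norm_num
  calc (W3 x * (Wlam lam x)^4)^2 ≤ (lam^(2:ℝ) * ‖x‖^(-(5:ℝ)))^2 :=
        pow_le_pow_left₀ (mul_nonneg (W3_nonneg x) (pow_nonneg (Wlam_nonneg hl0 x) 4)) h4 2
    _ = lam^(4:ℝ) * ‖x‖^(-(10:ℝ)) := by
        rw [mul_pow, rpow_pow hl0.le, rpow_pow (norm_nonneg x)]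
        norm_num

lemma jb_integrable' : Integrable (fun x : E3 => (1+‖x‖^2) ^ (-(2:ℝ))) := jb_integrable

def Mjb : ℝ := ∫ x : E3, (1+‖x‖^2) ^ (-(2:ℝ))
def volB : ℝ := (volume (Metric.ball (0:E3) 1)).toReal

lemma Mjb_nonneg : 0 ≤ Mjb := integral_nonneg fun x => Real.rpow_nonneg (by positivity) _
lemma volB_nonneg : 0 ≤ volB := ENNReal.toReal_nonneg

lemma key1 {lam : ℝ} (hlam : 0 < lam) (t : ℝ) :
    ∫ x in {x : E3 | |t| < ‖x‖}, ((W3 x)^4 * Wlam lam x)^2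
      ≤ 243 * Mjb * lam^(-(1:ℝ)) * (1+t^2)^(-(2:ℝ)) := by
  set c : ℝ := 243 * lam^(-(1:ℝ)) * (1+t^2)^(-(2:ℝ)) with hcdef
  have hc : 0 ≤ c := by positivity
  have hmono : ∫ x in {x : E3 | |t| < ‖x‖}, ((W3 x)^4 * Wlam lam x)^2
      ≤ ∫ x in {x : E3 | |t| < ‖x‖}, c * (1+‖x‖^2)^(-(2:ℝ)) := by
    apply integral_mono_of_nonneg
    · exact Filter.Eventually.of_forall fun x => sq_nonneg _
    · exact (jb_integrable.const_mul c).integrableOn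
    · filter_upwards [ae_restrict_mem (meas_S |t|)] with x hx
      have h1 : (1+t^2) ≤ (1+‖x‖^2) := by
        have : t^2 ≤ ‖x‖^2 := by
          rw [← sq_abs t]; exact pow_le_pow_left₀ (abs_nonneg t) (le_of_lt hx) 2
        linarith
      have h2 : (1+‖x‖^2)^(-(4:ℝ)) = (1+‖x‖^2)^(-(2:ℝ)) * (1+‖x‖^2)^(-(2:ℝ)) := by
        rw [← Real.rpow_add (by positivity)]; norm_num
      have h3 : (1+‖x‖^2)^(-(2:ℝ)) ≤ (1+t^2)^(-(2:ℝ)) :=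
        Real.rpow_le_rpow_of_nonpos (by positivity) h1 (by norm_num)
      calc ((W3 x)^4 * Wlam lam x)^2 ≤ 243 * lam^(-(1:ℝ)) * (1+‖x‖^2)^(-(4:ℝ)) := pw1 hlam x
        _ = (243 * lam^(-(1:ℝ)) * (1+‖x‖^2)^(-(2:ℝ))) * (1+‖x‖^2)^(-(2:ℝ)) := by
            rw [h2]; ring
        _ ≤ (243 * lam^(-(1:ℝ)) * (1+t^2)^(-(2:ℝ))) * (1+‖x‖^2)^(-(2:ℝ)) := by
            gcongr
        _ = c * (1+‖x‖^2)^(-(2:ℝ)) := by rw [hcdef]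
  calc ∫ x in {x : E3 | |t| < ‖x‖}, ((W3 x)^4 * Wlam lam x)^2
      ≤ ∫ x in {x : E3 | |t| < ‖x‖}, c * (1+‖x‖^2)^(-(2:ℝ)) := hmono
    _ ≤ ∫ x : E3, c * (1+‖x‖^2)^(-(2:ℝ)) := by
        apply setIntegral_le_integral (jb_integrable.const_mul c)
        exact Filter.Eventually.of_forall fun x => by positivity
    _ = c * Mjb := by rw [integral_const_mul]; rfl
    _ = 243 * Mjb * lam^(-(1:ℝ)) * (1+t^2)^(-(2:ℝ)) := by rw [hcdef]; ring

lemma key2 {lam t : ℝ} (hlam : 1 ≤ lam) (ht : 0 < |t|) :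
    ∫ x in {x : E3 | |t| < ‖x‖}, (W3 x * (Wlam lam x)^4)^2
      ≤ 27 * (3*volB) * lam^(-(2:ℝ)) * |t|^(-(1:ℝ)) := by
  have hl0 : (0:ℝ) < lam := by linarith
  set c : ℝ := 27 * lam^(-(2:ℝ)) with hcdef
  have hmono : ∫ x in {x : E3 | |t| < ‖x‖}, (W3 x * (Wlam lam x)^4)^2
      ≤ ∫ x in {x : E3 | |t| < ‖x‖}, c * ‖x‖^(-(4:ℝ)) := by
    apply integral_mono_of_nonneg
    · exact Filter.Eventually.of_forall fun x => sq_nonneg _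
    · exact (tail_integrableOn le_rfl ht).const_mul c
    · filter_upwards [ae_restrict_mem (meas_S |t|)] with x hx
      have hx0 : 0 < ‖x‖ := ht.trans hx
      calc (W3 x * (Wlam lam x)^4)^2 ≤ 27 * lam^(-(2:ℝ)) * ‖x‖^(-(4:ℝ)) := pw2 hlam hx0
        _ = c * ‖x‖^(-(4:ℝ)) := by rw [hcdef]
  calc ∫ x in {x : E3 | |t| < ‖x‖}, (W3 x * (Wlam lam x)^4)^2
      ≤ ∫ x in {x : E3 | |t| < ‖x‖}, c * ‖x‖^(-(4:ℝ)) := hmono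
    _ = c * ∫ x in {x : E3 | |t| < ‖x‖}, ‖x‖^(-(4:ℝ)) := integral_const_mul c _
    _ = c * ((3 * volB / (4-3)) * |t| ^ ((3:ℝ)-4)) := by
        rw [tail_integral (by norm_num) ht]; rfl
    _ = 27 * (3*volB) * lam^(-(2:ℝ)) * |t|^(-(1:ℝ)) := by
        rw [hcdef, show ((3:ℝ)-4) = -(1:ℝ) by norm_num, show ((4:ℝ)-3) = 1 by norm_num]
        ring

lemma key3 {lam t : ℝ} (hlam : 1 ≤ lam) (ht : 0 < |t|) :
    ∫ x in {x : E3 | |t| < ‖x‖}, (W3 x * (Wlam lam x)^4)^2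
      ≤ (3*volB/7) * lam^(4:ℝ) * |t|^(-(7:ℝ)) := by
  have hl0 : (0:ℝ) < lam := by linarith
  set c : ℝ := lam^(4:ℝ) with hcdef
  have hmono : ∫ x in {x : E3 | |t| < ‖x‖}, (W3 x * (Wlam lam x)^4)^2
      ≤ ∫ x in {x : E3 | |t| < ‖x‖}, c * ‖x‖^(-(10:ℝ)) := by
    apply integral_mono_of_nonneg
    · exact Filter.Eventually.of_forall fun x => sq_nonneg _
    · exact (tail_integrableOn (by norm_num) ht).const_mul c
    · filter_upwards [ae_restrict_mem (meas_S |t|)] with x hx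
      have hx0 : 0 < ‖x‖ := ht.trans hx
      calc (W3 x * (Wlam lam x)^4)^2 ≤ lam^(4:ℝ) * ‖x‖^(-(10:ℝ)) := pw3 hlam hx0
        _ = c * ‖x‖^(-(10:ℝ)) := by rw [hcdef]
  calc ∫ x in {x : E3 | |t| < ‖x‖}, (W3 x * (Wlam lam x)^4)^2
      ≤ ∫ x in {x : E3 | |t| < ‖x‖}, c * ‖x‖^(-(10:ℝ)) := hmono
    _ = c * ∫ x in {x : E3 | |t| < ‖x‖}, ‖x‖^(-(10:ℝ)) := integral_const_mul c _
    _ = c * ((3 * volB / (10-3)) * |t| ^ ((3:ℝ)-10)) := by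
        rw [tail_integral (by norm_num) ht]; rfl
    _ = (3*volB/7) * lam^(4:ℝ) * |t|^(-(7:ℝ)) := by
        rw [hcdef, show ((3:ℝ)-10) = -(7:ℝ) by norm_num, show ((10:ℝ)-3) = (7:ℝ) by norm_num]
        ring

lemma integrable_comp_abs' {f : ℝ → ℝ} (hf : IntegrableOn f (Ioi 0)) :
    Integrable (fun x => f |x|) := by
  have hIoi : IntegrableOn (fun x => f |x|) (Ioi 0) := by
    apply hf.congr_fun ?_ measurableSet_Ioi
    intro x hx
    simp [abs_of_pos (mem_Ioi.mp hx)]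
  have hIic : IntegrableOn (fun x ↦ f |x|) (Iic 0) := by
    rw [← Measure.map_neg_eq_self (volume : Measure ℝ)]
    have m : MeasurableEmbedding fun x : ℝ => -x := (Homeomorph.neg ℝ).measurableEmbedding
    rw [m.integrableOn_map_iff]
    simp_rw [Function.comp_def, abs_neg, neg_preimage, neg_Iic, neg_zero]
    exact (integrableOn_Ici_iff_integrableOn_Ioi (by simp)).mpr hIoi
  have h := hIic.union hIoi
  rwa [Iic_union_Ioi, integrableOn_univ] at h

lemma term1 {lam : ℝ} (hlam : 1 < lam) :
    L1L2 {p : EuclideanSpace ℝ (Fin 3) × ℝ | |p.2| < ‖p.1‖}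
      (fun x _ => (W3 x)^4 * Wlam lam x)
      ≤ (243*Mjb)^((1:ℝ)/2) * π * lam^(-(1:ℝ)/2) := by
  have hl0 : (0:ℝ) < lam := lt_trans one_pos hlam
  set c1 : ℝ := (243*Mjb)^((1:ℝ)/2) with hc1def
  have hc1 : 0 ≤ c1 := Real.rpow_nonneg (by nlinarith [Mjb_nonneg]) _
  have hpt : ∀ t : ℝ, (∫ x in {x : E3 | |t| < ‖x‖}, ((W3 x)^4 * Wlam lam x)^2) ^ ((1:ℝ)/2)
      ≤ (c1 * lam^(-(1:ℝ)/2)) * (1+t^2)⁻¹ := by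
    intro t
    have h2 : (∫ x in {x : E3 | |t| < ‖x‖}, ((W3 x)^4 * Wlam lam x)^2) ^ ((1:ℝ)/2)
        ≤ (243 * Mjb * lam^(-(1:ℝ)) * (1+t^2)^(-(2:ℝ))) ^ ((1:ℝ)/2) :=
      Real.rpow_le_rpow (integral_nonneg fun x => sq_nonneg _) (key1 hl0 t) (by norm_num)
    have h3 : (243 * Mjb * lam^(-(1:ℝ)) * (1+t^2)^(-(2:ℝ))) ^ ((1:ℝ)/2)
        = (c1 * lam^(-(1:ℝ)/2)) * (1+t^2)⁻¹ := by
      rw [Real.mul_rpow (mul_nonneg (mul_nonneg (by norm_num) Mjb_nonneg)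
          (Real.rpow_nonneg hl0.le _)) (Real.rpow_nonneg (by positivity) _),
        Real.mul_rpow (mul_nonneg (by norm_num) Mjb_nonneg) (Real.rpow_nonneg hl0.le _),
        ← Real.rpow_mul hl0.le, ← Real.rpow_mul (by positivity : (0:ℝ) ≤ 1+t^2)]
      norm_num [Real.rpow_neg_one, hc1def]
    linarith [h2, h3.le, h3.ge]
  show (∫ t : ℝ, (∫ x in {x : E3 | |t| < ‖x‖}, ((W3 x)^4 * Wlam lam x)^2) ^ ((1:ℝ)/2)) ≤ _
  calc (∫ t : ℝ, (∫ x in {x : E3 | |t| < ‖x‖}, ((W3 x)^4 * Wlam lam x)^2) ^ ((1:ℝ)/2))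
      ≤ ∫ t : ℝ, (c1 * lam^(-(1:ℝ)/2)) * (1+t^2)⁻¹ := by
        apply integral_mono_of_nonneg
        · exact Filter.Eventually.of_forall fun t =>
            Real.rpow_nonneg (integral_nonneg fun x => sq_nonneg _) _
        · exact integrable_inv_one_add_sq.const_mul _
        · exact Filter.Eventually.of_forall hpt
    _ = (c1 * lam^(-(1:ℝ)/2)) * π := by rw [integral_const_mul, integral_univ_inv_one_add_sq]
    _ = c1 * π * lam^(-(1:ℝ)/2) := by ring

lemma term2 {lam : ℝ} (hlam : 1 < lam) :
    L1L2 {p : EuclideanSpace ℝ (Fin 3) × ℝ | |p.2| < ‖p.1‖}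
      (fun x _ => W3 x * (Wlam lam x)^4)
      ≤ (4*(27*(3*volB))^((1:ℝ)/2) + (4/5)*(3*volB/7)^((1:ℝ)/2)) * lam^(-(1:ℝ)/2) := by
  have hl0 : (0:ℝ) < lam := lt_trans one_pos hlam
  have hl1 : (1:ℝ) ≤ lam := hlam.le
  set c2 : ℝ := (27*(3*volB))^((1:ℝ)/2) with hc2def
  set c3 : ℝ := (3*volB/7)^((1:ℝ)/2) with hc3def
  have hc2 : 0 ≤ c2 := Real.rpow_nonneg (by nlinarith [volB_nonneg]) _
  have hc3 : 0 ≤ c3 := Real.rpow_nonneg (by nlinarith [volB_nonneg]) _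
  set G : ℝ → ℝ := fun s => if s ≤ lam then (c2 * lam^(-(1:ℝ))) * s^(-(1:ℝ)/2)
    else (c3 * lam^(2:ℝ)) * s^(-(7:ℝ)/2) with hGdef
  have hint1 : IntegrableOn G (Ioc 0 lam) := by
    apply IntegrableOn.congr_fun
      (((intervalIntegral.intervalIntegrable_rpow' (by norm_num : (-1:ℝ) < -(1:ℝ)/2) (a := 0)
        (b := lam)).1).const_mul (c2 * lam^(-(1:ℝ))))
      ?_ measurableSet_Ioc
    intro s hs
    simp only [hGdef, if_pos hs.2]
  have hint2 : IntegrableOn G (Ioi lam) := by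
    apply IntegrableOn.congr_fun
      (((integrableOn_Ioi_rpow_of_lt (by norm_num : -(7:ℝ)/2 < -1) hl0)).const_mul
        (c3 * lam^(2:ℝ)))
      ?_ measurableSet_Ioi
    intro s hs
    simp only [hGdef, if_neg (not_le.mpr (mem_Ioi.mp hs))]
  have hG_int : IntegrableOn G (Ioi 0) := by
    have h := hint1.union hint2
    rwa [Ioc_union_Ioi_eq_Ioi hl0.le] at h
  have intg2 : Integrable (fun t : ℝ => G |t|) := integrable_comp_abs' hG_int
  -- pointwise bound
  have hpt : ∀ t : ℝ, t ≠ 0 →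
      (∫ x in {x : E3 | |t| < ‖x‖}, (W3 x * (Wlam lam x)^4)^2) ^ ((1:ℝ)/2) ≤ G |t| := by
    intro t ht0
    have ht : 0 < |t| := abs_pos.mpr ht0
    have hnn : 0 ≤ ∫ x in {x : E3 | |t| < ‖x‖}, (W3 x * (Wlam lam x)^4)^2 :=
      integral_nonneg fun x => sq_nonneg _
    by_cases hcase : |t| ≤ lam
    · have h2 := Real.rpow_le_rpow hnn (key2 hl1 ht) (by norm_num : (0:ℝ) ≤ (1:ℝ)/2)
      have h3 : (27 * (3*volB) * lam^(-(2:ℝ)) * |t|^(-(1:ℝ))) ^ ((1:ℝ)/2)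
          = (c2 * lam^(-(1:ℝ))) * |t|^(-(1:ℝ)/2) := by
        rw [Real.mul_rpow (mul_nonneg (by nlinarith [volB_nonneg])
            (Real.rpow_nonneg hl0.le _)) (Real.rpow_nonneg (abs_nonneg t) _),
          Real.mul_rpow (by nlinarith [volB_nonneg]) (Real.rpow_nonneg hl0.le _),
          ← Real.rpow_mul hl0.le, ← Real.rpow_mul (abs_nonneg t)]
        norm_num [hc2def]
      rw [hGdef]
      simp only [if_pos hcase]
      calc (∫ x in {x : E3 | |t| < ‖x‖}, (W3 x * (Wlam lam x)^4)^2) ^ ((1:ℝ)/2)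
          ≤ (27 * (3*volB) * lam^(-(2:ℝ)) * |t|^(-(1:ℝ))) ^ ((1:ℝ)/2) := h2
        _ = (c2 * lam^(-(1:ℝ))) * |t|^(-(1:ℝ)/2) := h3
    · have h2 := Real.rpow_le_rpow hnn (key3 hl1 ht) (by norm_num : (0:ℝ) ≤ (1:ℝ)/2)
      have h3 : ((3*volB/7) * lam^((4:ℝ)) * |t|^(-(7:ℝ))) ^ ((1:ℝ)/2)
          = (c3 * lam^((2:ℝ))) * |t|^(-(7:ℝ)/2) := by
        rw [Real.mul_rpow (mul_nonneg (by nlinarith [volB_nonneg])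
            (Real.rpow_nonneg hl0.le _)) (Real.rpow_nonneg (abs_nonneg t) _),
          Real.mul_rpow (by nlinarith [volB_nonneg]) (Real.rpow_nonneg hl0.le _),
          ← Real.rpow_mul hl0.le, ← Real.rpow_mul (abs_nonneg t)]
        norm_num [hc3def]
      rw [hGdef]
      simp only [if_neg hcase]
      calc (∫ x in {x : E3 | |t| < ‖x‖}, (W3 x * (Wlam lam x)^4)^2) ^ ((1:ℝ)/2)
          ≤ ((3*volB/7) * lam^((4:ℝ)) * |t|^(-(7:ℝ))) ^ ((1:ℝ)/2) := h2
        _ = (c3 * lam^((2:ℝ))) * |t|^(-(7:ℝ)/2) := h3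
  -- value of ∫ G |t|
  have e1 : ∫ s in Ioc (0:ℝ) lam, G s = (c2 * lam^(-(1:ℝ))) * (2 * lam^((1:ℝ)/2)) := by
    rw [setIntegral_congr_fun measurableSet_Ioc
      (fun s hs => by simp only [hGdef, if_pos hs.2] :
        EqOn G (fun s => (c2 * lam^(-(1:ℝ))) * s^(-(1:ℝ)/2)) (Ioc 0 lam)),
      integral_const_mul]
    congr 1
    rw [← intervalIntegral.integral_of_le hl0.le,
      integral_rpow (Or.inl (by norm_num : (-1:ℝ) < -(1:ℝ)/2)),
      show (-(1:ℝ)/2 + 1) = (1:ℝ)/2 by norm_num,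
      Real.zero_rpow (by norm_num : ((1:ℝ)/2) ≠ 0)]
    ring
  have e2 : ∫ s in Ioi lam, G s = (c3 * lam^((2:ℝ))) * ((2/5) * lam^(-(5:ℝ)/2)) := by
    rw [setIntegral_congr_fun measurableSet_Ioi
      (fun s hs => by simp only [hGdef, if_neg (not_le.mpr (mem_Ioi.mp hs))] :
        EqOn G (fun s => (c3 * lam^((2:ℝ))) * s^(-(7:ℝ)/2)) (Ioi lam)),
      integral_const_mul]
    congr 1
    rw [integral_Ioi_rpow_of_lt (by norm_num : -(7:ℝ)/2 < -1) hl0,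
      show (-(7:ℝ)/2 + 1) = -(5:ℝ)/2 by norm_num]
    ring
  have hsplit : ∫ s in Ioi (0:ℝ), G s = (∫ s in Ioc 0 lam, G s) + ∫ s in Ioi lam, G s := by
    rw [← setIntegral_union (Ioc_disjoint_Ioi le_rfl) measurableSet_Ioi hint1 hint2,
      Ioc_union_Ioi_eq_Ioi hl0.le]
  have r1 : lam^(-(1:ℝ)) * lam^((1:ℝ)/2) = lam^(-(1:ℝ)/2) := by
    rw [← Real.rpow_add hl0]; norm_num
  have r2 : lam^((2:ℝ)) * lam^(-(5:ℝ)/2) = lam^(-(1:ℝ)/2) := by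
    rw [← Real.rpow_add hl0]; norm_num
  have val : ∫ t : ℝ, G |t| = (4*c2 + (4/5)*c3) * lam^(-(1:ℝ)/2) := by
    rw [integral_comp_abs (f := G), hsplit, e1, e2]
    calc 2 * ((c2 * lam^(-(1:ℝ))) * (2 * lam^((1:ℝ)/2))
          + (c3 * lam^((2:ℝ))) * ((2/5) * lam^(-(5:ℝ)/2)))
        = 4*c2 * (lam^(-(1:ℝ)) * lam^((1:ℝ)/2))
          + (4/5)*c3 * (lam^((2:ℝ)) * lam^(-(5:ℝ)/2)) := by ring
      _ = (4*c2 + (4/5)*c3) * lam^(-(1:ℝ)/2) := by rw [r1, r2]; ring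
  -- a.e. bound and conclusion
  have h0 : ∀ᵐ (t:ℝ), t ≠ 0 := by
    rw [ae_iff]
    have : {a : ℝ | ¬a ≠ 0} = {0} := by ext a; simp
    rw [this]
    exact measure_singleton 0
  show (∫ t : ℝ, (∫ x in {x : E3 | |t| < ‖x‖}, (W3 x * (Wlam lam x)^4)^2) ^ ((1:ℝ)/2)) ≤ _
  calc (∫ t : ℝ, (∫ x in {x : E3 | |t| < ‖x‖}, (W3 x * (Wlam lam x)^4)^2) ^ ((1:ℝ)/2))
      ≤ ∫ t : ℝ, G |t| := by
        apply integral_mono_of_nonneg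
        · exact Filter.Eventually.of_forall fun t =>
            Real.rpow_nonneg (integral_nonneg fun x => sq_nonneg _) _
        · exact intg2
        · filter_upwards [h0] with t ht using hpt t ht
    _ = (4*c2 + (4/5)*c3) * lam^(-(1:ℝ)/2) := val

theorem stmt5 :
    ∃ C : ℝ, 0 < C ∧ ∀ lam : ℝ, 1 < lam →
      L1L2 {p | |p.2| < ‖p.1‖} (fun x _ => (W3 x)^4 * Wlam lam x) +
      L1L2 {p | |p.2| < ‖p.1‖} (fun x _ => W3 x * (Wlam lam x)^4)
        ≤ C * lam ^ (-(1:ℝ)/2) := by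
  refine ⟨(243*Mjb)^((1:ℝ)/2) * π
      + (4*(27*(3*volB))^((1:ℝ)/2) + (4/5)*(3*volB/7)^((1:ℝ)/2)) + 1, ?_, ?_⟩
  · have h1 : 0 ≤ (243*Mjb)^((1:ℝ)/2) * π :=
      mul_nonneg (Real.rpow_nonneg (by nlinarith [Mjb_nonneg]) _) Real.pi_nonneg
    have h2 : 0 ≤ (27*(3*volB))^((1:ℝ)/2) := Real.rpow_nonneg (by nlinarith [volB_nonneg]) _
    have h3 : 0 ≤ (3*volB/7)^((1:ℝ)/2) := Real.rpow_nonneg (by nlinarith [volB_nonneg]) _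
    linarith
  · intro lam hlam
    have t1 := term1 hlam
    have t2 := term2 hlam
    have hnn : 0 ≤ lam ^ (-(1:ℝ)/2) := Real.rpow_nonneg (by linarith) _
    have expand : ((243*Mjb)^((1:ℝ)/2) * π
        + (4*(27*(3*volB))^((1:ℝ)/2) + (4/5)*(3*volB/7)^((1:ℝ)/2)) + 1) * lam ^ (-(1:ℝ)/2)
        = (243*Mjb)^((1:ℝ)/2) * π * lam ^ (-(1:ℝ)/2)
          + (4*(27*(3*volB))^((1:ℝ)/2) + (4/5)*(3*volB/7)^((1:ℝ)/2)) * lam ^ (-(1:ℝ)/2)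
          + lam ^ (-(1:ℝ)/2) := by ring
    rw [expand]
    linarith
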